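/- A position M = (n_0, ..., n_7) in extended circular nim ECN(8_{1,3}, 2) is a P-position if and only if n_0 ⊕ n_2 ⊕ n_4 ⊕ n_6 = 0 and n_1 ⊕ n_3 ⊕ n_5 ⊕ n_7 = 0. -/

import Mathlib

/-- `IsN move x`: `x` is an N-position (next player wins) for the game with
move relation `move` (least fixed point; correct for short games). -/
inductive IsN {α : Type*} (move : α → α → Prop) : α → Prop
  | intro (x y : α) (hxy : move x y) (hy : ∀ z, move y z → IsN move z) : IsN move x

/-- `IsP move x`: `x` is a P-position (previous player wins) under normal play. -/
def IsP {α : Type*} (move : α → α → Prop) (x : α) : Prop :=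
  ∀ y, move x y → IsN move y

/-- Move relation of extended circular nim `ECN(m_S, k)`: reduce some piles,
all lying among `k` piles taken every `s`-th pile (for some `s ∈ S`) starting
at some index `i`, removing at least one token in total. -/
def ecnMove (m : ℕ) (S : Set ℕ) (k : ℕ) (x y : Fin m → ℕ) : Prop :=
  y ≠ x ∧ (∀ j, y j ≤ x j) ∧
    ∃ s ∈ S, ∃ i : ℕ, ∀ j : Fin m, y j ≠ x j → ∃ t < k, (j : ℕ) = (i + t * s) % m

/-- `cyc m Q n` : some cyclic rotation of `n`, or of its reversal, satisfies `Q`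
(the relation `M ∈_↻ P`). -/
def cyc (m : ℕ) (Q : (Fin m → ℕ) → Prop) (n : Fin m → ℕ) : Prop :=
  ∃ r : ℕ,
    Q (fun j => n ⟨(j.1 + r) % m, Nat.mod_lt _ (Nat.lt_of_le_of_lt (Nat.zero_le _) j.isLt)⟩) ∨
    Q (fun j => n ⟨(r + (m - j.1)) % m, Nat.mod_lt _ (Nat.lt_of_le_of_lt (Nat.zero_le _) j.isLt)⟩)


-- scratch: nim4 lemma
lemma xor_left_comm' (a b c : ℕ) : a ^^^ (b ^^^ c) = b ^^^ (a ^^^ c) := by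
  rw [← Nat.xor_assoc, Nat.xor_comm a, Nat.xor_assoc]

lemma nim4 (a b c d : ℕ) (h : a ^^^ b ^^^ c ^^^ d ≠ 0) :
    (∃ v < a, v ^^^ b ^^^ c ^^^ d = 0) ∨ (∃ v < b, a ^^^ v ^^^ c ^^^ d = 0) ∨
    (∃ v < c, a ^^^ b ^^^ v ^^^ d = 0) ∨ (∃ v < d, a ^^^ b ^^^ c ^^^ v = 0) := by
  have h' : a ^^^ b ^^^ (c ^^^ d) ≠ 0 := by rwa [← Nat.xor_assoc]
  rcases Nat.xor_trichotomy h' with h1 | h1 | h1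
  · exact Or.inl ⟨b ^^^ (c ^^^ d), h1, by
      simp [Nat.xor_assoc, Nat.xor_comm, xor_left_comm', Nat.xor_self, xor_cancel_left]⟩
  · refine Or.inr (Or.inl ⟨(c ^^^ d) ^^^ a, h1, ?_⟩)
    simp [Nat.xor_assoc, Nat.xor_comm, xor_left_comm', Nat.xor_self, xor_cancel_left]
  · -- a ^^^ b < c ^^^ d
    have h2 : c ^^^ d ^^^ (a ^^^ b) ≠ 0 := by
      intro h0
      exact absurd (xor_eq_zero_iff.mp h0) (by omega)
    rcases Nat.xor_trichotomy h2 with h3 | h3 | h3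
    · refine Or.inr (Or.inr (Or.inl ⟨d ^^^ (a ^^^ b), h3, ?_⟩))
      simp [Nat.xor_assoc, Nat.xor_comm, xor_left_comm', Nat.xor_self, xor_cancel_left]
    · refine Or.inr (Or.inr (Or.inr ⟨(a ^^^ b) ^^^ c, h3, ?_⟩))
      simp [Nat.xor_assoc, Nat.xor_comm, xor_left_comm', Nat.xor_self, xor_cancel_left]
    · exact absurd h3 (by omega)

namespace ECN813

local notation "mv" => ecnMove 8 {1, 3} 2

def xorE (n : Fin 8 → ℕ) : ℕ := n 0 ^^^ n 2 ^^^ n 4 ^^^ n 6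
def xorO (n : Fin 8 → ℕ) : ℕ := n 1 ^^^ n 3 ^^^ n 5 ^^^ n 7
def Pp (n : Fin 8 → ℕ) : Prop := xorE n = 0 ∧ xorO n = 0

/-- Differing piles of a move with the same parity coincide. -/
lemma move_parity {x y : Fin 8 → ℕ} (h : mv x y) :
    ∀ j1 j2 : Fin 8, y j1 ≠ x j1 → y j2 ≠ x j2 → j1.1 % 2 = j2.1 % 2 → j1 = j2 := by
  obtain ⟨-, -, s, hs, i, hloc⟩ := h
  have hs' : s = 1 ∨ s = 3 := by simpa using hs
  intro j1 j2 h1 h2 hpar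
  have loc : ∀ j : Fin 8, y j ≠ x j → j.1 = i % 8 ∨ j.1 = (i + s) % 8 := by
    intro j hj
    obtain ⟨t, ht, hjeq⟩ := hloc j hj
    interval_cases t
    · left; simpa using hjeq
    · right; simpa using hjeq
  have l1 := loc j1 h1
  have l2 := loc j2 h2
  apply Fin.ext
  rcases hs' with rfl | rfl <;> omega

lemma pair_good_aux : ∀ e o : Fin 8, e.1 % 2 = 0 → o.1 % 2 = 1 →
    ∃ p : Fin 2 × Fin 8,
      (e.1 = p.2.1 % 8 ∨ e.1 = (p.2.1 + (if p.1 = 0 then 1 else 3)) % 8) ∧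
      (o.1 = p.2.1 % 8 ∨ o.1 = (p.2.1 + (if p.1 = 0 then 1 else 3)) % 8) := by
  decide

/-- Any reduction touching at most one even pile `e` and one odd pile `o` is a move. -/
lemma move_of_pair {x y : Fin 8 → ℕ} (e o : Fin 8) (he : e.1 % 2 = 0) (ho : o.1 % 2 = 1)
    (hne : y ≠ x) (hle : ∀ j, y j ≤ x j) (hd : ∀ j, y j ≠ x j → j = e ∨ j = o) :
    mv x y := by
  obtain ⟨⟨c, i⟩, hei, hoi⟩ := pair_good_aux e o he ho
  refine ⟨hne, hle, if c = 0 then 1 else 3, by rcases Fin.exists_fin_two.mp ⟨c, rfl⟩ <;>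
    simp_all, i.1, ?_⟩
  intro j hj
  rcases hd j hj with rfl | rfl
  · rcases hei with h | h
    · exact ⟨0, by norm_num, by simpa using h⟩
    · exact ⟨1, by norm_num, by simpa using h⟩
  · rcases hoi with h | h
    · exact ⟨0, by norm_num, by simpa using h⟩
    · exact ⟨1, by norm_num, by simpa using h⟩

lemma xorE_update_odd (x : Fin 8 → ℕ) (o : Fin 8) (ho : o.1 % 2 = 1) (w : ℕ) :
    xorE (Function.update x o w) = xorE x := by
  have h0 : (0 : Fin 8) ≠ o := by intro h; rw [← h] at ho; exact absurd ho (by decide)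
  have h2 : (2 : Fin 8) ≠ o := by intro h; rw [← h] at ho; exact absurd ho (by decide)
  have h4 : (4 : Fin 8) ≠ o := by intro h; rw [← h] at ho; exact absurd ho (by decide)
  have h6 : (6 : Fin 8) ≠ o := by intro h; rw [← h] at ho; exact absurd ho (by decide)
  simp [xorE, Function.update_of_ne, h0, h2, h4, h6]

lemma xorO_update_even (x : Fin 8 → ℕ) (e : Fin 8) (he : e.1 % 2 = 0) (w : ℕ) :
    xorO (Function.update x e w) = xorO x := by
  have h1 : (1 : Fin 8) ≠ e := by intro h; rw [← h] at he; exact absurd he (by decide)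
  have h3 : (3 : Fin 8) ≠ e := by intro h; rw [← h] at he; exact absurd he (by decide)
  have h5 : (5 : Fin 8) ≠ e := by intro h; rw [← h] at he; exact absurd he (by decide)
  have h7 : (7 : Fin 8) ≠ e := by intro h; rw [← h] at he; exact absurd he (by decide)
  simp [xorO, Function.update_of_ne, h1, h3, h5, h7]

lemma evenFix (x : Fin 8 → ℕ) (h : xorE x ≠ 0) :
    ∃ e : Fin 8, e.1 % 2 = 0 ∧ ∃ v < x e, xorE (Function.update x e v) = 0 := by
  rcases nim4 (x 0) (x 2) (x 4) (x 6) h with ⟨v, hv, h0⟩ | ⟨v, hv, h0⟩ | ⟨v, hv, h0⟩ | ⟨v, hv, h0⟩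
  · exact ⟨0, by decide, v, hv, by simpa [xorE, Function.update] using h0⟩
  · exact ⟨2, by decide, v, hv, by simpa [xorE, Function.update] using h0⟩
  · exact ⟨4, by decide, v, hv, by simpa [xorE, Function.update] using h0⟩
  · exact ⟨6, by decide, v, hv, by simpa [xorE, Function.update] using h0⟩

lemma oddFix (x : Fin 8 → ℕ) (h : xorO x ≠ 0) :
    ∃ o : Fin 8, o.1 % 2 = 1 ∧ ∃ v < x o, xorO (Function.update x o v) = 0 := by
  rcases nim4 (x 1) (x 3) (x 5) (x 7) h with ⟨v, hv, h0⟩ | ⟨v, hv, h0⟩ | ⟨v, hv, h0⟩ | ⟨v, hv, h0⟩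
  · exact ⟨1, by decide, v, hv, by simpa [xorO, Function.update] using h0⟩
  · exact ⟨3, by decide, v, hv, by simpa [xorO, Function.update] using h0⟩
  · exact ⟨5, by decide, v, hv, by simpa [xorO, Function.update] using h0⟩
  · exact ⟨7, by decide, v, hv, by simpa [xorO, Function.update] using h0⟩

lemma update_ne {x : Fin 8 → ℕ} {e : Fin 8} {v : ℕ} (hv : v < x e) :
    Function.update x e v ≠ x := by
  intro h
  have := congrFun h e
  simp [Function.update_self] at this
  omega

/-- From a non-P position there is a move to a P position. -/
lemma exists_move_to_P {x : Fin 8 → ℕ} (h : ¬ Pp x) :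
    ∃ y, mv x y ∧ Pp y := by
  by_cases hE : xorE x = 0
  · have hO : xorO x ≠ 0 := fun h' => h ⟨hE, h'⟩
    obtain ⟨o, ho, v, hv, h0⟩ := oddFix x hO
    refine ⟨Function.update x o v, move_of_pair 0 o (by decide) ho (update_ne hv) ?_ ?_,
      by rw [xorE_update_odd x o ho]; exact hE, h0⟩
    · intro j
      by_cases hj : j = o
      · subst hj; simp [Function.update_self]; omega
      · simp [Function.update_of_ne hj]
    · intro j hj
      right
      by_contra hne
      exact hj (Function.update_of_ne hne _ _)
  · obtain ⟨e, he, v, hv, hE0⟩ := evenFix x hE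
    by_cases hO : xorO x = 0
    · refine ⟨Function.update x e v, move_of_pair e 1 he (by decide) (update_ne hv) ?_ ?_,
        hE0, by rw [xorO_update_even x e he]; exact hO⟩
      · intro j
        by_cases hj : j = e
        · subst hj; simp [Function.update_self]; omega
        · simp [Function.update_of_ne hj]
      · intro j hj
        left
        by_contra hne
        exact hj (Function.update_of_ne hne _ _)
    · obtain ⟨o, ho, w, hw, hO0⟩ := oddFix x hO
      have heo : e ≠ o := by intro h'; rw [h'] at he; omega
      refine ⟨Function.update (Function.update x e v) o w,
        move_of_pair e o he ho ?_ ?_ ?_, ?_, ?_⟩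
      · intro hyx
        have := congrFun hyx e
        rw [Function.update_of_ne heo, Function.update_self] at this
        omega
      · intro j
        by_cases hj : j = o
        · subst hj; rw [Function.update_self]; omega
        · rw [Function.update_of_ne hj]
          by_cases hj' : j = e
          · subst hj'; rw [Function.update_self]; omega
          · rw [Function.update_of_ne hj']
      · intro j hj
        by_cases hj' : j = e
        · exact Or.inl hj'
        · by_cases hj'' : j = o
          · exact Or.inr hj''
          · exact absurd (by rw [Function.update_of_ne hj'', Function.update_of_ne hj']) hj
      · rw [xorE_update_odd _ o ho]; exact hE0
      · rw [Function.update_comm heo, xorO_update_even _ e he]; exact hO0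


lemma xor4_cancel1 {a a' b c d : ℕ} (h1 : a ^^^ b ^^^ c ^^^ d = 0)
    (h2 : a' ^^^ b ^^^ c ^^^ d = 0) : a = a' := by simpa using h1.trans h2.symm
lemma xor4_cancel2 {a b b' c d : ℕ} (h1 : a ^^^ b ^^^ c ^^^ d = 0)
    (h2 : a ^^^ b' ^^^ c ^^^ d = 0) : b = b' := by simpa using h1.trans h2.symm
lemma xor4_cancel3 {a b c c' d : ℕ} (h1 : a ^^^ b ^^^ c ^^^ d = 0)
    (h2 : a ^^^ b ^^^ c' ^^^ d = 0) : c = c' := by simpa using h1.trans h2.symm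
lemma xor4_cancel4 {a b c d d' : ℕ} (h1 : a ^^^ b ^^^ c ^^^ d = 0)
    (h2 : a ^^^ b ^^^ c ^^^ d' = 0) : d = d' := by simpa using h1.trans h2.symm

/-- A move from a P position leads to a non-P position. -/
lemma not_P_of_move {x y : Fin 8 → ℕ} (hP : Pp x) (h : mv x y) : ¬ Pp y := by
  have hpar := move_parity h
  obtain ⟨hne, hle, -⟩ := h
  obtain ⟨j, hj⟩ := Function.ne_iff.mp hne
  rintro ⟨hyE, hyO⟩
  obtain ⟨hxE, hxO⟩ := hP
  unfold xorE at hxE hyE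
  unfold xorO at hxO hyO
  have huniq : ∀ j' : Fin 8, y j' ≠ x j' → j'.1 % 2 = j.1 % 2 → j' = j :=
    fun j' h1 h2 => hpar j' j h1 hj h2
  fin_cases j
  · -- j = 0
    have e2 : y 2 = x 2 := by
      by_contra hc
      exact absurd (huniq 2 hc (by decide)) (by decide)
    have e4 : y 4 = x 4 := by
      by_contra hc
      exact absurd (huniq 4 hc (by decide)) (by decide)
    have e6 : y 6 = x 6 := by
      by_contra hc
      exact absurd (huniq 6 hc (by decide)) (by decide)
    rw [e2, e4, e6] at hyE
    exact hj (xor4_cancel1 hyE hxE)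
  · -- j = 1
    have e3 : y 3 = x 3 := by
      by_contra hc
      exact absurd (huniq 3 hc (by decide)) (by decide)
    have e5 : y 5 = x 5 := by
      by_contra hc
      exact absurd (huniq 5 hc (by decide)) (by decide)
    have e7 : y 7 = x 7 := by
      by_contra hc
      exact absurd (huniq 7 hc (by decide)) (by decide)
    rw [e3, e5, e7] at hyO
    exact hj (xor4_cancel1 hyO hxO)
  · -- j = 2
    have e0 : y 0 = x 0 := by
      by_contra hc
      exact absurd (huniq 0 hc (by decide)) (by decide)
    have e4 : y 4 = x 4 := by
      by_contra hc
      exact absurd (huniq 4 hc (by decide)) (by decide)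
    have e6 : y 6 = x 6 := by
      by_contra hc
      exact absurd (huniq 6 hc (by decide)) (by decide)
    rw [e0, e4, e6] at hyE
    exact hj (xor4_cancel2 hyE hxE)
  · -- j = 3
    have e1 : y 1 = x 1 := by
      by_contra hc
      exact absurd (huniq 1 hc (by decide)) (by decide)
    have e5 : y 5 = x 5 := by
      by_contra hc
      exact absurd (huniq 5 hc (by decide)) (by decide)
    have e7 : y 7 = x 7 := by
      by_contra hc
      exact absurd (huniq 7 hc (by decide)) (by decide)
    rw [e1, e5, e7] at hyO
    exact hj (xor4_cancel2 hyO hxO)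
  · -- j = 4
    have e0 : y 0 = x 0 := by
      by_contra hc
      exact absurd (huniq 0 hc (by decide)) (by decide)
    have e2 : y 2 = x 2 := by
      by_contra hc
      exact absurd (huniq 2 hc (by decide)) (by decide)
    have e6 : y 6 = x 6 := by
      by_contra hc
      exact absurd (huniq 6 hc (by decide)) (by decide)
    rw [e0, e2, e6] at hyE
    exact hj (xor4_cancel3 hyE hxE)
  · -- j = 5
    have e1 : y 1 = x 1 := by
      by_contra hc
      exact absurd (huniq 1 hc (by decide)) (by decide)
    have e3 : y 3 = x 3 := by
      by_contra hc
      exact absurd (huniq 3 hc (by decide)) (by decide)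
    have e7 : y 7 = x 7 := by
      by_contra hc
      exact absurd (huniq 7 hc (by decide)) (by decide)
    rw [e1, e3, e7] at hyO
    exact hj (xor4_cancel3 hyO hxO)
  · -- j = 6
    have e0 : y 0 = x 0 := by
      by_contra hc
      exact absurd (huniq 0 hc (by decide)) (by decide)
    have e2 : y 2 = x 2 := by
      by_contra hc
      exact absurd (huniq 2 hc (by decide)) (by decide)
    have e4 : y 4 = x 4 := by
      by_contra hc
      exact absurd (huniq 4 hc (by decide)) (by decide)
    rw [e0, e2, e4] at hyE
    exact hj (xor4_cancel4 hyE hxE)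
  · -- j = 7
    have e1 : y 1 = x 1 := by
      by_contra hc
      exact absurd (huniq 1 hc (by decide)) (by decide)
    have e3 : y 3 = x 3 := by
      by_contra hc
      exact absurd (huniq 3 hc (by decide)) (by decide)
    have e5 : y 5 = x 5 := by
      by_contra hc
      exact absurd (huniq 5 hc (by decide)) (by decide)
    rw [e1, e3, e5] at hyO
    exact hj (xor4_cancel4 hyO hxO)

lemma sum_lt {x y : Fin 8 → ℕ} (h : mv x y) : ∑ j, y j < ∑ j, x j := by
  obtain ⟨hne, hle, -⟩ := h
  obtain ⟨j, hj⟩ := Function.ne_iff.mp hne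
  exact Finset.sum_lt_sum (fun i _ => hle i)
    ⟨j, Finset.mem_univ j, lt_of_le_of_ne (hle j) hj⟩

lemma isN_of_not_P : ∀ n : Fin 8 → ℕ, ¬ Pp n → IsN (ecnMove 8 {1, 3} 2) n := by
  suffices H : ∀ N, ∀ n : Fin 8 → ℕ, ∑ j, n j < N → ¬ Pp n → IsN (ecnMove 8 {1, 3} 2) n from
    fun n hn => H (∑ j, n j + 1) n (Nat.lt_succ_self _) hn
  intro N
  induction N with
  | zero => intro n hn; omega
  | succ N ih =>
    intro n hn hP
    obtain ⟨y, hy, hPy⟩ := exists_move_to_P hP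
    refine IsN.intro n y hy (fun z hz => ?_)
    have h1 := sum_lt hy
    have h2 := sum_lt hz
    exact ih z (by omega) (not_P_of_move hPy hz)

lemma not_P_of_isN : ∀ n : Fin 8 → ℕ, IsN (ecnMove 8 {1, 3} 2) n → ¬ Pp n := by
  intro n h
  induction h with
  | intro x y hxy hy ih =>
    intro hP
    obtain ⟨z, hz, hPz⟩ := exists_move_to_P (not_P_of_move hP hxy)
    exact ih z hz hPz

lemma main (n : Fin 8 → ℕ) : IsP (ecnMove 8 {1, 3} 2) n ↔ Pp n := by
  constructor
  · intro h
    by_contra hn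
    obtain ⟨y, hy, hPy⟩ := exists_move_to_P hn
    exact not_P_of_isN y (h y hy) hPy
  · intro hP y hy
    exact isN_of_not_P y (not_P_of_move hP hy)

end ECN813

theorem ecn8_13_2_P_iff (n : Fin 8 → ℕ) :
    IsP (ecnMove 8 {1, 3} 2) n ↔
      n 0 ^^^ n 2 ^^^ n 4 ^^^ n 6 = 0 ∧ n 1 ^^^ n 3 ^^^ n 5 ^^^ n 7 = 0 := by
  exact ECN813.main n
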